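/- Lemma (Gaussian weight estimates along dynamic characteristics). Let g, β, T > 0 and D ≥ 0. Let Φ : ℝ²×[0,∞) → ℝ and Ψ : [0,T] × (ℝ²×[0,∞)) → ℝ be C¹ with Φ(x∥, 0) = 0 and Ψ(s, x∥, 0) = 0 for all x∥ and s, with ‖∇ₓΦ‖_{L∞} + sup_{s∈[0,T]} ‖∇ₓΨ(s)‖_{L∞} ≤ g/2 and |∂ₜΨ(s,y)| ≤ D for all (s,y). Fix t ∈ [0,T], (x,v) with x₃ ≥ 0, and let (𝒳, 𝒱) : [t−τ_B, t+τ_F] → (ℝ²×[0,∞)) × ℝ³ (with [t−τ_B, t+τ_F] ⊆ [0,T], τ_B, τ_F ≥ 0) solve 𝒳' = 𝒱, 𝒱'(s) = −∇ₓΨ(s, 𝒳(s)) − ∇ₓΦ(𝒳(s)) − g e₃, with 𝒳(t) = x, 𝒱(t) = v and 𝒳₃(s) ≥ 0 for all s in the interval. Define ŵ_β(s, y, u) := exp( β( |u|² + 2Φ(y) + 2Ψ(s,y) + 2g y₃ ) ). Then for all s, s' ∈ [t−τ_B, t+τ_F]: (a) ŵ_β(s', 𝒳(s'), 𝒱(s'))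 / ŵ_β(s, 𝒳(s), 𝒱(s)) ≤ exp( (8β/g) D √(v₃² + g x₃) ); (b) 1 / ŵ_β(s, 𝒳(s), 𝒱(s)) ≤ exp( (64β/g²) D² ) · exp( −(β/2)|v|² ) · exp( −(β/2) g x₃ ). -/

import Mathlib

/-!
Statement 11 (Lemma 4.1): Gaussian weight estimates along dynamic characteristics.
-/

open MeasureTheory Real Set

noncomputable section

abbrev V3 : Type := Fin 3 → ℝ

/-- Squared Euclidean length `|v|²`. -/
def sq3 (v : V3) : ℝ := ∑ i, (v i) ^ 2

/-- Partial derivative of a scalar function in the `i`-th coordinate direction. -/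
def pd (i : Fin 3) (f : V3 → ℝ) (x : V3) : ℝ := fderiv ℝ f x (Pi.single i 1)

/-- Euclidean norm of the gradient. -/
def gradNorm (f : V3 → ℝ) (x : V3) : ℝ := Real.sqrt (∑ i, (pd i f x) ^ 2)

/-- The dynamic Gaussian weight `ŵ_β(s,y,u) = exp(β(|u|² + 2Φ(y) + 2Ψ(s,y) + 2g y₃))`. -/
def wdynW (β g : ℝ) (Φ : V3 → ℝ) (Ψ : ℝ → V3 → ℝ) (s : ℝ) (y u : V3) : ℝ :=
  Real.exp (β * (sq3 u + 2 * Φ y + 2 * Ψ s y + 2 * g * y 2))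

lemma abs_pd_le_gradNorm (i : Fin 3) (f : V3 → ℝ) (y : V3) : |pd i f y| ≤ gradNorm f y := by
  rw [gradNorm, ← Real.sqrt_sq_eq_abs]
  apply Real.sqrt_le_sqrt
  exact Finset.single_le_sum (f := fun j => (pd j f y) ^ 2)
    (fun j _ => sq_nonneg _) (Finset.mem_univ i)

lemma fderiv_apply_sum (f : V3 → ℝ) (y : V3) (u : V3) :
    fderiv ℝ f y u = ∑ i, u i * pd i f y := by
  have hu : u = ∑ i, u i • (Pi.single i 1 : V3) := by
    ext j; fin_cases j <;> simp [Fin.sum_univ_three, Pi.single_apply]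
  conv_lhs => rw [hu]
  rw [map_sum]
  simp [pd, smul_eq_mul]

lemma mvt_abs {f f' : ℝ → ℝ} {s : Set ℝ} (hs : Convex ℝ s)
    (hd : ∀ τ ∈ s, HasDerivAt f (f' τ) τ) {C : ℝ}
    (hb : ∀ τ ∈ s, |f' τ| ≤ C) {p q : ℝ} (hp : p ∈ s) (hq : q ∈ s) :
    |f q - f p| ≤ C * |q - p| := by
  have := hs.norm_image_sub_le_of_norm_hasDerivWithin_le
    (f' := f') (fun τ hτ => (hd τ hτ).hasDerivWithinAt) (fun τ hτ => hb τ hτ) hp hq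
  simpa [Real.norm_eq_abs] using this

lemma vert_path_hasDerivAt (f : V3 → ℝ) (hf : Differentiable ℝ f) (y : V3) (r : ℝ) :
    HasDerivAt (fun r : ℝ => f (Function.update y 2 r)) (pd 2 f (Function.update y 2 r)) r := by
  have h0 : (fun r : ℝ => Function.update y 2 r)
      = fun r : ℝ => Function.update y 2 0 + r • (Pi.single 2 1 : V3) := by
    funext r; ext j; fin_cases j <;> simp [Function.update]
  have h1 : HasDerivAt (fun r : ℝ => Function.update y 2 r) ((Pi.single 2 1 : V3)) r := by
    rw [h0]
    simpa using (((hasDerivAt_id r).smul_const ((Pi.single 2 1 : V3))).const_add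
      (Function.update y 2 0))
  exact (hf _).hasFDerivAt.comp_hasDerivAt r h1

lemma abs_le_of_bdry {f : V3 → ℝ} (hf : Differentiable ℝ f) {c : ℝ}
    (hbdry : ∀ y : V3, y 2 = 0 → f y = 0)
    (hgrad : ∀ y : V3, 0 ≤ y 2 → gradNorm f y ≤ c)
    (y : V3) (hy : 0 ≤ y 2) : |f y| ≤ c * y 2 := by
  have key := mvt_abs (convex_Icc 0 (y 2))
    (fun τ _ => vert_path_hasDerivAt f hf y τ)
    (C := c) (fun τ hτ => by
      refine (abs_pd_le_gradNorm 2 f _).trans (hgrad _ ?_)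
      simpa using hτ.1)
    (left_mem_Icc.2 hy) (right_mem_Icc.2 hy)
  have h1 : Function.update y 2 (y 2) = y := Function.update_eq_self 2 y
  have h2 : f (Function.update y 2 0) = 0 := hbdry _ (by simp)
  rw [h1, h2, sub_zero, sub_zero, abs_of_nonneg hy] at key
  exact key

lemma dini_helper {f : ℝ → ℝ} {C A B : ℝ} (hab : A ≤ B)
    (hf : ContinuousOn f (Icc A B))
    (key : ∀ σ ∈ Ico A B, ∃ M : ℝ → ℝ, HasDerivAt M (0:ℝ) σ ∧
      ∀ᶠ z in nhdsWithin σ (Ioi σ), f z - f σ ≤ M z - M σ + C * (z - σ)) :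
    f B ≤ f A + C * (B - A) := by
  have H := image_le_of_liminf_slope_right_le_deriv_boundary (f := f) (a := A) (b := B)
    (B := fun z => f A + C * (z - A)) (B' := fun _ => C) hf (by simp)
    (by fun_prop)
    (fun σ _ => by
      simpa using (((hasDerivWithinAt_id σ (Ici σ)).sub_const A).const_mul C).const_add (f A))
    ?_ (right_mem_Icc.2 hab)
  · simpa using H
  · intro σ hσ r hr
    obtain ⟨M, hM, hev⟩ := key σ hσ
    have hslope : Filter.Tendsto (slope M σ) (nhdsWithin σ {σ}ᶜ) (nhds 0) :=
      hasDerivAt_iff_tendsto_slope.1 hM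
    have h2 : ∀ᶠ z in nhdsWithin σ (Ioi σ), slope M σ z < r - C := by
      have : ∀ᶠ z in nhdsWithin σ {σ}ᶜ, slope M σ z < r - C :=
        hslope.eventually_lt_const (by linarith)
      exact nhdsWithin_mono σ (fun z (hz : z ∈ Ioi σ) => ne_of_gt hz) this
    have h3 : ∀ᶠ z in nhdsWithin σ (Ioi σ), z ∈ Ioi σ := eventually_mem_nhdsWithin
    refine ((hev.and (h2.and h3)).mono ?_).frequently
    rintro z ⟨h1, h2, (h3 : σ < z)⟩
    have hzpos : 0 < z - σ := by linarith
    rw [slope_def_field] at h2 ⊢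
    rw [div_lt_iff₀ hzpos] at h2 ⊢
    linarith [h1, h2]

lemma comp_deriv {F : ℝ → V3} {F' : V3} {σ : ℝ} (i : Fin 3) (h : HasDerivAt F F' σ) :
    HasDerivAt (fun z => F z i) (F' i) σ := by
  have := (ContinuousLinearMap.proj (R := ℝ) (φ := fun _ : Fin 3 => ℝ) i).hasFDerivAt.comp_hasDerivAt σ h
  exact this


set_option maxHeartbeats 2000000 in
/-- **Gaussian weight estimates along dynamic characteristics.** -/
theorem weight_along_characteristics
    (g β T D : ℝ) (hg : 0 < g) (hβ : 0 < β) (hT : 0 < T) (hD : 0 ≤ D)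
    (Φ : V3 → ℝ) (Ψ Ψt : ℝ → V3 → ℝ)
    (hΦdiff : Differentiable ℝ Φ)
    (hΨdiff : ∀ s, Differentiable ℝ (Ψ s))
    (hΨt : ∀ s ∈ Set.Icc (0:ℝ) T, ∀ y : V3, 0 ≤ y 2 →
      HasDerivAt (fun σ => Ψ σ y) (Ψt s y) s)
    (hΦbdry : ∀ y : V3, y 2 = 0 → Φ y = 0)
    (hΨbdry : ∀ s (y : V3), y 2 = 0 → Ψ s y = 0)
    -- ‖∇ₓΦ‖_∞ + sup_s ‖∇ₓΨ(s)‖_∞ ≤ g/2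
    (a b : ℝ)
    (hΦgrad : ∀ y : V3, 0 ≤ y 2 → gradNorm Φ y ≤ a)
    (hΨgrad : ∀ s ∈ Set.Icc (0:ℝ) T, ∀ y : V3, 0 ≤ y 2 → gradNorm (Ψ s) y ≤ b)
    (hab : a + b ≤ g / 2)
    -- |∂ₜΨ| ≤ D
    (hΨtD : ∀ s ∈ Set.Icc (0:ℝ) T, ∀ y : V3, 0 ≤ y 2 → |Ψt s y| ≤ D)
    -- the characteristic through (t,x,v), staying in {x₃ ≥ 0}
    (t τB τF : ℝ) (hτB : 0 ≤ τB) (hτF : 0 ≤ τF)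
    (hsub : Set.Icc (t - τB) (t + τF) ⊆ Set.Icc 0 T)
    (x v : V3) (hx : 0 ≤ x 2)
    (X V : ℝ → V3) (hXt : X t = x) (hVt : V t = v)
    (hode : ∀ s ∈ Set.Icc (t - τB) (t + τF),
      HasDerivAt X (V s) s ∧
      HasDerivAt V
        (fun i => -(pd i (Ψ s) (X s)) - pd i Φ (X s) - (if i = 2 then g else 0)) s ∧
      0 ≤ X s 2) :
    ∀ s ∈ Set.Icc (t - τB) (t + τF), ∀ s' ∈ Set.Icc (t - τB) (t + τF),
      -- (a) ratio bound
      wdynW β g Φ Ψ s' (X s') (V s') / wdynW β g Φ Ψ s (X s) (V s)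
          ≤ Real.exp (8 * β / g * D * Real.sqrt ((v 2) ^ 2 + g * x 2)) ∧
      -- (b) Gaussian lower bound for the weight
      (wdynW β g Φ Ψ s (X s) (V s))⁻¹
          ≤ Real.exp (64 * β / g ^ 2 * D ^ 2)
              * Real.exp (-(β / 2) * sq3 v) * Real.exp (-(β / 2) * g * x 2) := by
  have htI : t ∈ Set.Icc (t - τB) (t + τF) := ⟨by linarith, by linarith⟩
  set r : ℝ := Real.sqrt ((v 2) ^ 2 + g * x 2) with hrdef
  have hr0 : 0 ≤ r := Real.sqrt_nonneg _
  have hrsq : r ^ 2 = (v 2) ^ 2 + g * x 2 :=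
    Real.sq_sqrt (by nlinarith [mul_nonneg hg.le hx, sq_nonneg (v 2)])
  have hrv : |v 2| ≤ r := by
    rw [hrdef, ← Real.sqrt_sq_eq_abs]
    exact Real.sqrt_le_sqrt (by nlinarith [mul_nonneg hg.le hx])
  -- time Lipschitz bound for Ψ
  have timeLip : ∀ (y : V3), 0 ≤ y 2 → ∀ p ∈ Set.Icc (0:ℝ) T, ∀ q ∈ Set.Icc (0:ℝ) T,
      |Ψ q y - Ψ p y| ≤ D * |q - p| := by
    intro y hy p hp q hq
    exact mvt_abs (convex_Icc 0 T) (fun τ hτ => hΨt τ hτ y hy)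
      (fun τ hτ => hΨtD τ hτ y hy) hp hq
  -- vertical acceleration bound
  have hV2d : ∀ σ ∈ Set.Icc (t - τB) (t + τF), HasDerivAt (fun z => V z 2)
      (-(pd 2 (Ψ σ) (X σ)) - pd 2 Φ (X σ) - g) σ := by
    intro σ hσ
    simpa using comp_deriv 2 (hode σ hσ).2.1
  have hA2 : ∀ σ ∈ Set.Icc (t - τB) (t + τF),
      -(pd 2 (Ψ σ) (X σ)) - pd 2 Φ (X σ) - g ≤ -(g/2) := by
    intro σ hσ
    have h1 := abs_le.1 ((abs_pd_le_gradNorm 2 (Ψ σ) (X σ)).trans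
      (hΨgrad σ (hsub hσ) _ (hode σ hσ).2.2))
    have h2 := abs_le.1 ((abs_pd_le_gradNorm 2 Φ (X σ)).trans (hΦgrad _ (hode σ hσ).2.2))
    linarith [h1.1, h1.2, h2.1, h2.2, hab]
  -- V component antitone comparison
  have hφd : ∀ σ ∈ Set.Icc (t - τB) (t + τF),
      HasDerivAt (fun z => V z 2 + g/2 * z)
        ((-(pd 2 (Ψ σ) (X σ)) - pd 2 Φ (X σ) - g) + g/2) σ := by
    intro σ hσ
    simpa using (hV2d σ hσ).fun_add ((hasDerivAt_id σ).const_mul (g/2))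
  have hφanti : AntitoneOn (fun z => V z 2 + g/2 * z) (Set.Icc (t - τB) (t + τF)) := by
    apply antitoneOn_of_deriv_nonpos (convex_Icc _ _)
    · intro σ hσ; exact (hφd σ hσ).continuousAt.continuousWithinAt
    · intro σ hσ
      rw [interior_Icc] at hσ
      exact (hφd σ (Ioo_subset_Icc_self hσ)).differentiableAt.differentiableWithinAt
    · intro σ hσ
      rw [interior_Icc] at hσ
      rw [(hφd σ (Ioo_subset_Icc_self hσ)).deriv]
      linarith [hA2 σ (Ioo_subset_Icc_self hσ)]
  have hVt2 : V t 2 = v 2 := by rw [hVt]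
  have hVle : ∀ σ ∈ Set.Icc (t - τB) (t + τF), t ≤ σ →
      V σ 2 + g/2 * σ ≤ v 2 + g/2 * t := by
    intro σ hσ h
    have := hφanti htI hσ h
    simpa [hVt2] using this
  have hVge : ∀ σ ∈ Set.Icc (t - τB) (t + τF), σ ≤ t →
      v 2 + g/2 * t ≤ V σ 2 + g/2 * σ := by
    intro σ hσ h
    have := hφanti hσ htI h
    simpa [hVt2] using this
  -- parabola bound for X σ 2
  have hψd : ∀ σ ∈ Set.Icc (t - τB) (t + τF),
      HasDerivAt (fun z => X z 2 - v 2 * (z - t) + g/4 * (z - t)^2)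
        (V σ 2 - v 2 + g/2 * (σ - t)) σ := by
    intro σ hσ
    have h1 : HasDerivAt (fun z => X z 2) (V σ 2) σ := comp_deriv 2 (hode σ hσ).1
    have h2 : HasDerivAt (fun z : ℝ => z - t) 1 σ := (hasDerivAt_id σ).sub_const t
    have h4 := h2.const_mul (v 2)
    have h3 := (h2.fun_pow 2).const_mul (g/4)
    have h5 := (h1.fun_sub h4).fun_add h3
    refine h5.congr_deriv ?_
    push_cast
    ring
  have hψle : ∀ σ ∈ Set.Icc (t - τB) (t + τF),
      X σ 2 - v 2 * (σ - t) + g/4 * (σ - t)^2 ≤ x 2 := by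
    have hXt2 : X t 2 = x 2 := by rw [hXt]
    have hsubF : Set.Icc t (t + τF) ⊆ Set.Icc (t - τB) (t + τF) :=
      Set.Icc_subset_Icc (by linarith) le_rfl
    have hsubB : Set.Icc (t - τB) t ⊆ Set.Icc (t - τB) (t + τF) :=
      Set.Icc_subset_Icc le_rfl (by linarith)
    have hanti : AntitoneOn (fun z => X z 2 - v 2 * (z - t) + g/4 * (z - t)^2)
        (Set.Icc t (t + τF)) := by
      apply antitoneOn_of_deriv_nonpos (convex_Icc _ _)
      · intro σ hσ; exact (hψd σ (hsubF hσ)).continuousAt.continuousWithinAt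
      · intro σ hσ
        rw [interior_Icc] at hσ
        exact (hψd σ (hsubF (Ioo_subset_Icc_self hσ))).differentiableAt.differentiableWithinAt
      · intro σ hσ
        rw [interior_Icc] at hσ
        have hσI := hsubF (Ioo_subset_Icc_self hσ)
        rw [(hψd σ hσI).deriv]
        have := hVle σ hσI hσ.1.le
        linarith
    have hmono : MonotoneOn (fun z => X z 2 - v 2 * (z - t) + g/4 * (z - t)^2)
        (Set.Icc (t - τB) t) := by
      apply monotoneOn_of_deriv_nonneg (convex_Icc _ _)
      · intro σ hσ; exact (hψd σ (hsubB hσ)).continuousAt.continuousWithinAt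
      · intro σ hσ
        rw [interior_Icc] at hσ
        exact (hψd σ (hsubB (Ioo_subset_Icc_self hσ))).differentiableAt.differentiableWithinAt
      · intro σ hσ
        rw [interior_Icc] at hσ
        have hσI := hsubB (Ioo_subset_Icc_self hσ)
        rw [(hψd σ hσI).deriv]
        have := hVge σ hσI hσ.2.le
        linarith
    intro σ hσ
    rcases le_total t σ with h | h
    · have := hanti (Set.left_mem_Icc.2 (by linarith [hσ.2])) ⟨h, hσ.2⟩ h
      simpa [hXt2] using this
    · have := hmono ⟨hσ.1, h⟩ (Set.right_mem_Icc.2 (by linarith [hσ.1])) h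
      simpa [hXt2] using this
  -- time-span bound
  have hspan : ∀ σ ∈ Set.Icc (t - τB) (t + τF),
      g * (σ - t) ≤ 2 * (v 2 + r) ∧ g * (t - σ) ≤ 2 * (r - v 2) := by
    intro σ hσ
    have hX0 : 0 ≤ X σ 2 := (hode σ hσ).2.2
    have hq := hψle σ hσ
    have habs := abs_le.1 hrv
    have quad : g/4 * (σ - t)^2 - v 2 * (σ - t) - x 2 ≤ 0 := by linarith
    constructor
    · rcases le_total t σ with h | h
      · by_contra hcon
        push_neg at hcon
        have hp1 : (0:ℝ) < g * (σ - t) - 2 * (v 2) - 2 * r := by linarith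
        have hp2 : (0:ℝ) < g * (σ - t) - 2 * (v 2) + 2 * r := by linarith
        have hprod := mul_pos hp1 hp2
        have hq4 : 0 ≤ (x 2 + v 2 * (σ - t) - g/4 * (σ - t)^2) * g :=
          mul_nonneg (by linarith) hg.le
        nlinarith [hrsq]
      · nlinarith [habs.1, habs.2, hg.le, mul_nonneg hg.le (sub_nonneg.2 h)]
    · rcases le_total σ t with h | h
      · by_contra hcon
        push_neg at hcon
        have hp1 : (0:ℝ) < g * (t - σ) + 2 * (v 2) - 2 * r := by linarith
        have hp2 : (0:ℝ) < g * (t - σ) + 2 * (v 2) + 2 * r := by linarith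
        have hprod := mul_pos hp1 hp2
        have hq4 : 0 ≤ (x 2 + v 2 * (σ - t) - g/4 * (σ - t)^2) * g :=
          mul_nonneg (by linarith) hg.le
        nlinarith [hrsq]
      · nlinarith [habs.1, habs.2, hg.le, mul_nonneg hg.le (sub_nonneg.2 h)]
  have hspan2 : ∀ p ∈ Set.Icc (t - τB) (t + τF), ∀ q ∈ Set.Icc (t - τB) (t + τF),
      p ≤ q → g * (q - p) ≤ 4 * r := by
    intro p hp q hq _
    have h1 := (hspan q hq).1
    have h2 := (hspan p hp).2
    nlinarith [h1, h2]
  -- the energy function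
  set E : ℝ → ℝ := fun σ => (∑ i, (V σ i)^2) + 2 * Φ (X σ) + 2 * Ψ σ (X σ) + 2 * g * (X σ 2)
    with hE
  have hwE : ∀ σ, wdynW β g Φ Ψ σ (X σ) (V σ) = Real.exp (β * E σ) := by
    intro σ
    rw [hE]
    simp only [wdynW, sq3]
  -- continuity of E
  have hXcont : ContinuousOn X (Set.Icc (t - τB) (t + τF)) :=
    fun σ hσ => ((hode σ hσ).1.continuousAt).continuousWithinAt
  have hVcont : ContinuousOn V (Set.Icc (t - τB) (t + τF)) :=
    fun σ hσ => ((hode σ hσ).2.1.continuousAt).continuousWithinAt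
  have hΨXcont : ContinuousOn (fun σ => Ψ σ (X σ)) (Set.Icc (t - τB) (t + τF)) := by
    intro σ₀ hσ₀
    have hfix : ContinuousWithinAt (fun σ => Ψ σ₀ (X σ)) (Set.Icc (t - τB) (t + τF)) σ₀ :=
      ((hΨdiff σ₀).continuous.comp_continuousOn hXcont) σ₀ hσ₀
    rw [ContinuousWithinAt, tendsto_iff_dist_tendsto_zero]
    apply squeeze_zero' (Filter.Eventually.of_forall (fun σ => dist_nonneg))
    · filter_upwards [self_mem_nhdsWithin] with σ hσ
      calc dist (Ψ σ (X σ)) (Ψ σ₀ (X σ₀))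
          ≤ dist (Ψ σ (X σ)) (Ψ σ₀ (X σ)) + dist (Ψ σ₀ (X σ)) (Ψ σ₀ (X σ₀)) :=
            dist_triangle _ _ _
        _ ≤ D * |σ - σ₀| + dist (Ψ σ₀ (X σ)) (Ψ σ₀ (X σ₀)) := by
            have := timeLip (X σ) (hode σ hσ).2.2 σ₀ (hsub hσ₀) σ (hsub hσ)
            rw [Real.dist_eq]
            linarith
    · have t1 : Filter.Tendsto (fun σ : ℝ => D * |σ - σ₀|)
          (nhdsWithin σ₀ (Set.Icc (t - τB) (t + τF))) (nhds 0) := by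
        have hc : Continuous (fun σ : ℝ => D * |σ - σ₀|) := by fun_prop
        have := (hc.tendsto σ₀).mono_left (nhdsWithin_le_nhds (s := Set.Icc (t - τB) (t + τF)))
        simpa using this
      have t2 := tendsto_iff_dist_tendsto_zero.1 hfix
      simpa using t1.add t2
  have hEcont : ContinuousOn E (Set.Icc (t - τB) (t + τF)) := by
    rw [hE]
    refine ContinuousOn.add (ContinuousOn.add (ContinuousOn.add ?_ ?_) ?_) ?_
    · exact (continuous_finset_sum _ (fun i _ => (continuous_apply i).pow 2)).comp_continuousOn
        hVcont
    · exact continuousOn_const.mul (hΦdiff.continuous.comp_continuousOn hXcont)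
    · exact continuousOn_const.mul hΨXcont
    · exact continuousOn_const.mul ((continuous_apply 2).comp_continuousOn hXcont)
  -- the key Dini estimate for E
  have hEkey : ∀ σ₀ ∈ Set.Icc (t - τB) (t + τF), σ₀ < t + τF → ∃ M : ℝ → ℝ,
      HasDerivAt M 0 σ₀ ∧ ∀ᶠ z in nhdsWithin σ₀ (Set.Ioi σ₀),
        |E z - E σ₀ - (M z - M σ₀)| ≤ 2 * D * (z - σ₀) := by
    intro σ₀ hσ₀ hlt
    have hXd := (hode σ₀ hσ₀).1
    refine ⟨fun z => (∑ i, (V z i)^2) + 2 * Φ (X z) + 2 * Ψ σ₀ (X z) + 2 * g * (X z 2), ?_, ?_⟩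
    · have hVcomp : ∀ i : Fin 3, HasDerivAt (fun z => V z i)
          (-(pd i (Ψ σ₀) (X σ₀)) - pd i Φ (X σ₀) - (if i = 2 then g else 0)) σ₀ :=
        fun i => comp_deriv i (hode σ₀ hσ₀).2.1
      have h1 : HasDerivAt (fun z => ∑ i, (V z i)^2)
          (∑ i : Fin 3, 2 * V σ₀ i *
            (-(pd i (Ψ σ₀) (X σ₀)) - pd i Φ (X σ₀) - (if i = 2 then g else 0))) σ₀ := by
        have h := HasDerivAt.fun_sum (fun (i : Fin 3) (_ : i ∈ Finset.univ) => ((hVcomp i).fun_pow 2))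
        refine h.congr_deriv ?_
        apply Finset.sum_congr rfl
        intro i _
        push_cast
        ring
      have h2 : HasDerivAt (fun z => Φ (X z)) (∑ i, V σ₀ i * pd i Φ (X σ₀)) σ₀ := by
        have h := (hΦdiff (X σ₀)).hasFDerivAt.comp_hasDerivAt σ₀ hXd
        rw [show (fderiv ℝ Φ (X σ₀)) (V σ₀) = ∑ i, V σ₀ i * pd i Φ (X σ₀) from
          fderiv_apply_sum Φ (X σ₀) (V σ₀)] at h
        exact h
      have h3 : HasDerivAt (fun z => Ψ σ₀ (X z)) (∑ i, V σ₀ i * pd i (Ψ σ₀) (X σ₀)) σ₀ := by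
        have h := ((hΨdiff σ₀) (X σ₀)).hasFDerivAt.comp_hasDerivAt σ₀ hXd
        rw [show (fderiv ℝ (Ψ σ₀) (X σ₀)) (V σ₀) = ∑ i, V σ₀ i * pd i (Ψ σ₀) (X σ₀) from
          fderiv_apply_sum (Ψ σ₀) (X σ₀) (V σ₀)] at h
        exact h
      have h4 : HasDerivAt (fun z => X z 2) (V σ₀ 2) σ₀ := comp_deriv 2 hXd
      have htot := ((h1.fun_add (h2.const_mul 2)).fun_add (h3.const_mul 2)).fun_add (h4.const_mul (2*g))
      refine htot.congr_deriv ?_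
      have e0 : ((0:Fin 3) = 2) = False := by decide
      have e1 : ((1:Fin 3) = 2) = False := by decide
      have e2 : ((2:Fin 3) = 2) = True := by decide
      simp only [Fin.sum_univ_three, e0, e1, e2, if_true, if_false]
      ring
    · have hIoc : Set.Ioc σ₀ (t + τF) ∈ nhdsWithin σ₀ (Set.Ioi σ₀) :=
        Ioc_mem_nhdsGT_of_mem ⟨le_rfl, hlt⟩
      filter_upwards [hIoc] with z hz
      have hzI : z ∈ Set.Icc (t - τB) (t + τF) := ⟨le_trans hσ₀.1 hz.1.le, hz.2⟩
      have hlip := timeLip (X z) (hode z hzI).2.2 σ₀ (hsub hσ₀) z (hsub hzI)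
      have heq : E z - E σ₀ -
          (((∑ i, (V z i)^2) + 2 * Φ (X z) + 2 * Ψ σ₀ (X z) + 2 * g * (X z 2)) -
           ((∑ i, (V σ₀ i)^2) + 2 * Φ (X σ₀) + 2 * Ψ σ₀ (X σ₀) + 2 * g * (X σ₀ 2)))
          = 2 * (Ψ z (X z) - Ψ σ₀ (X z)) := by
        rw [hE]; ring
      rw [heq]
      have habs : |2 * (Ψ z (X z) - Ψ σ₀ (X z))| = 2 * |Ψ z (X z) - Ψ σ₀ (X z)| := by
        rw [abs_mul]; norm_num
      rw [habs]
      have hzz : |z - σ₀| = z - σ₀ := abs_of_pos (by linarith [hz.1])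
      rw [hzz] at hlip
      linarith
  -- E is (2D)-Lipschitz on the interval
  have hElip : ∀ p ∈ Set.Icc (t - τB) (t + τF), ∀ q ∈ Set.Icc (t - τB) (t + τF), p ≤ q →
      |E q - E p| ≤ 2 * D * (q - p) := by
    intro p hp q hq hpq
    have hsubpq : Set.Icc p q ⊆ Set.Icc (t - τB) (t + τF) := Set.Icc_subset_Icc hp.1 hq.2
    have hcont : ContinuousOn E (Set.Icc p q) := hEcont.mono hsubpq
    have key : ∀ σ₀ ∈ Set.Ico p q, ∃ M : ℝ → ℝ, HasDerivAt M 0 σ₀ ∧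
        ∀ᶠ z in nhdsWithin σ₀ (Set.Ioi σ₀),
          |E z - E σ₀ - (M z - M σ₀)| ≤ 2 * D * (z - σ₀) := by
      intro σ₀ hσ₀
      exact hEkey σ₀ (hsubpq ⟨hσ₀.1, hσ₀.2.le⟩) (lt_of_lt_of_le hσ₀.2 hq.2)
    have hup : E q ≤ E p + 2 * D * (q - p) := by
      apply dini_helper hpq hcont
      intro σ₀ hσ₀
      obtain ⟨M, hM, hev⟩ := key σ₀ hσ₀
      exact ⟨M, hM, hev.mono (fun z hz => by linarith [(abs_le.1 hz).2])⟩
    have hdown : -E q ≤ -E p + 2 * D * (q - p) := by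
      apply dini_helper (f := fun z => -E z) hpq hcont.neg
      intro σ₀ hσ₀
      obtain ⟨M, hM, hev⟩ := key σ₀ hσ₀
      refine ⟨fun z => -M z, by simpa using hM.fun_neg,
        hev.mono (fun z hz => by
          have h := (abs_le.1 hz).1
          show -E z - -E σ₀ ≤ -M z - -M σ₀ + 2 * D * (z - σ₀)
          linarith)⟩
    rw [abs_le]
    constructor <;> linarith
  -- cleared form
  have hg8 : ∀ p ∈ Set.Icc (t - τB) (t + τF), ∀ q ∈ Set.Icc (t - τB) (t + τF),
      g * (E q - E p) ≤ 8 * D * r := by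
    intro p hp q hq
    rcases le_total p q with h | h
    · have h1 := (abs_le.1 (hElip p hp q hq h)).2
      have h2 := hspan2 p hp q hq h
      nlinarith [mul_le_mul_of_nonneg_left h1 hg.le, mul_le_mul_of_nonneg_left h2 hD]
    · have h1 := (abs_le.1 (hElip q hq p hp h)).1
      have h2 := hspan2 q hq p hp h
      nlinarith [mul_le_mul_of_nonneg_left (neg_le_of_neg_le h1) hg.le,
        mul_le_mul_of_nonneg_left h2 hD]
  -- lower bound on E t
  have hEt : E t = sq3 v + 2 * Φ x + 2 * Ψ t x + 2 * g * (x 2) := by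
    rw [hE]; simp [hXt, hVt, sq3]
  have hEtge : sq3 v + g * (x 2) ≤ E t := by
    have hΦx := abs_le_of_bdry hΦdiff hΦbdry hΦgrad x hx
    have hΨx := abs_le_of_bdry (hΨdiff t) (hΨbdry t)
      (fun y hy => hΨgrad t (hsub htI) y hy) x hx
    have h1 := (abs_le.1 hΦx).1
    have h2 := (abs_le.1 hΨx).1
    have h3 : (a + b) * (x 2) ≤ g/2 * (x 2) := mul_le_mul_of_nonneg_right hab hx
    rw [hEt]
    nlinarith
  have hv2sq : (v 2)^2 ≤ sq3 v := by
    simp only [sq3, Fin.sum_univ_three]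
    nlinarith [sq_nonneg (v 0), sq_nonneg (v 1)]
  clear_value r E
  -- conclusion
  intro s hs s' hs'
  constructor
  · rw [hwE, hwE, ← Real.exp_sub, Real.exp_le_exp]
    have h1 := hg8 s hs s' hs'
    rw [show (8:ℝ) * β / g * D * r = β * (8 * D * r) / g from by ring,
        show β * E s' - β * E s = β * (E s' - E s) from by ring,
        le_div_iff₀ hg]
    nlinarith [mul_le_mul_of_nonneg_left h1 hβ.le]
  · rw [hwE, ← Real.exp_neg, ← Real.exp_add, ← Real.exp_add, Real.exp_le_exp]
    have hg2 : (0:ℝ) < g^2 := by positivity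
    have h1 := hg8 s hs t htI   -- g * (E t - E s) ≤ 8 D r
    have hkey : 8 * D * r * g ≤ 64 * D^2 + g^2 * (sq3 v) / 2 + g^3 * (x 2) / 2 := by
      nlinarith [sq_nonneg (g * r - 8 * D), hrsq,
        mul_le_mul_of_nonneg_left hv2sq (sq_nonneg g), mul_nonneg hg.le hx, sq_nonneg D,
        mul_nonneg (mul_nonneg hg.le hg.le) (mul_nonneg hg.le hx)]
    rw [← mul_le_mul_iff_of_pos_right hg2]
    have expand : (64 * β / g ^ 2 * D ^ 2 + -(β / 2) * sq3 v + -(β / 2) * g * x 2) * g^2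
        = 64 * β * D^2 - β/2 * (sq3 v) * g^2 - β/2 * g^3 * (x 2) := by
      field_simp
      ring
    rw [expand]
    have hA := mul_le_mul_of_nonneg_left h1 (mul_nonneg hβ.le hg.le)
    have hB := mul_le_mul_of_nonneg_left hEtge (mul_nonneg hβ.le (sq_nonneg g))
    have hC := mul_le_mul_of_nonneg_left hkey hβ.le
    nlinarith [hA, hB, hC]


end
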